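/- Let H^B be a compatible ergodic m-variate mapping on (Z_2)^m and let x_0, x_1, x_2, ... be the trajectory x_{i+1} = H^B(x_i) mod 2^n with coordinates x_i = (x_i^0,...,x_i^{m-1}). Then for each s ∈ {0,...,n−1} and j ∈ {0,...,m−1}, the binary sequence {δ_s(x_i^j) : i = 0,1,2,...} is purely periodic with period length exactly 2^{ms+j+1}. -/

import Mathlib

open scoped BigOperators

/-- The `j`-th binary digit of a 2-adic integer, as an element of `ZMod 2`. -/
noncomputable def bit2 (j : ℕ) (x : ℤ_[2]) : ZMod 2 := ((x.appr (j+1) / 2^j : ℕ) : ZMod 2)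

/-- Compatibility = 1-Lipschitz w.r.t. the 2-adic metric. -/
def Compatible (f : ℤ_[2] → ℤ_[2]) : Prop := ∀ x y : ℤ_[2], ‖f x - f y‖ ≤ ‖x - y‖

/-- Reduction of a 2-adic integer modulo `2^n`. -/
noncomputable def padMod (n : ℕ) (x : ℤ_[2]) : ZMod (2^n) := (x.appr n : ZMod (2^n))

/-- The map induced by `f : ℤ₂ → ℤ₂` on `ZMod (2^n)` (via canonical lifts). -/
noncomputable def inducedMap (n : ℕ) (f : ℤ_[2] → ℤ_[2]) : ZMod (2^n) → ZMod (2^n) :=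
  fun a => padMod n (f ((a.val : ℕ) : ℤ_[2]))

/-- A self-map of a set is a single cycle (transitive on points). -/
def IsSingleCycle {α : Type*} (g : α → α) : Prop := ∀ a b : α, ∃ k : ℕ, g^[k] a = b

/-- Measure preservation: `f` induces a bijection modulo `2^n` for every `n`. -/
def MeasurePreservingZ (f : ℤ_[2] → ℤ_[2]) : Prop := ∀ n : ℕ, Function.Bijective (inducedMap n f)

/-- Ergodicity: `f` induces a single-cycle permutation modulo `2^n` for every `n`. -/
def ErgodicZ (f : ℤ_[2] → ℤ_[2]) : Prop := ∀ n : ℕ, IsSingleCycle (inducedMap n f)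

/-- Induced map modulo `2^n` of an `m`-variate map on `(ℤ₂)^m`. -/
noncomputable def inducedMapM (m n : ℕ) (G : (Fin m → ℤ_[2]) → Fin m → ℤ_[2]) :
    (Fin m → ZMod (2^n)) → Fin m → ZMod (2^n) :=
  fun a j => padMod n (G (fun i => (((a i).val : ℕ) : ℤ_[2])) j)

/-- Coordinatewise compatibility of an `m`-variate map. -/
def CompatibleM (m : ℕ) (G : (Fin m → ℤ_[2]) → Fin m → ℤ_[2]) : Prop :=
  ∀ (n : ℕ) (x y : Fin m → ℤ_[2]), (∀ i, padMod n (x i) = padMod n (y i)) →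
    ∀ j, padMod n (G x j) = padMod n (G y j)

/-- Ergodicity of an `m`-variate map: single cycle modulo `2^n` for all `n`. -/
def ErgodicM (m : ℕ) (G : (Fin m → ℤ_[2]) → Fin m → ℤ_[2]) : Prop :=
  ∀ n : ℕ, IsSingleCycle (inducedMapM m n G)

/-- The 2-adic integer with prescribed binary digits. -/
noncomputable def ofBits (b : ℕ → ZMod 2) : ℤ_[2] := ∑' i : ℕ, ((b i).val : ℤ_[2]) * 2^i

/-- Bitwise XOR of 2-adic integers. -/
noncomputable def xor2 (x y : ℤ_[2]) : ℤ_[2] := ofBits (fun i => bit2 i x + bit2 i y)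

/-- Bitwise AND of 2-adic integers. -/
noncomputable def and2 (x y : ℤ_[2]) : ℤ_[2] := ofBits (fun i => bit2 i x * bit2 i y)

/-- Bitwise AND of a list, the empty AND being `-1` (the all-ones string). -/
noncomputable def andL (l : List ℤ_[2]) : ℤ_[2] := l.foldr and2 (-1)

/-- The `s`-th binary digit of an element of `ZMod (2^n)`. -/
def bitZM (n s : ℕ) (a : ZMod (2^n)) : ZMod 2 := ((a.val / 2^s : ℕ) : ZMod 2)

section AuxPeriod

lemma padMod_eq_toZModPow (n : ℕ) (x : ℤ_[2]) : padMod n x = PadicInt.toZModPow n x := rfl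

lemma padMod_natCast (n : ℕ) (c : ℕ) : padMod n (c : ℤ_[2]) = (c : ZMod (2^n)) := by
  rw [padMod_eq_toZModPow, map_natCast]

lemma padMod_lift (n : ℕ) (a : ZMod (2^n)) : padMod n ((a.val : ℕ) : ℤ_[2]) = a := by
  rw [padMod_natCast, ZMod.natCast_val, ZMod.cast_id]

instance aux_neZero_pow (n : ℕ) : NeZero ((2:ℕ)^n) :=
  ⟨Nat.pos_iff_ne_zero.mp (Nat.pow_pos (by norm_num))⟩

lemma val_padMod (n : ℕ) (x : ℤ_[2]) : (padMod n x).val = x.appr n := by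
  rw [padMod, ZMod.val_natCast, Nat.mod_eq_of_lt (PadicInt.appr_lt x n)]

lemma padMod_inj (n : ℕ) (x y : ℤ_[2]) : padMod n x = padMod n y ↔ x.appr n = y.appr n := by
  constructor
  · intro h; rw [← val_padMod, h, val_padMod]
  · intro h; rw [padMod, h, padMod]

lemma appr_mod (x : ℤ_[2]) {s t : ℕ} (h : s ≤ t) : x.appr s = x.appr t % 2^s := by
  obtain ⟨c, hc⟩ := PadicInt.dvd_appr_sub_appr x s t h
  have hle := PadicInt.appr_mono x h
  have : x.appr t = x.appr s + 2^s * c := by omega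
  rw [this, Nat.add_mul_mod_self_left, Nat.mod_eq_of_lt (PadicInt.appr_lt x s)]

lemma bit2_eq_of_appr (x : ℤ_[2]) {k t : ℕ} (h : k < t) :
    bit2 k x = ((x.appr t / 2^k : ℕ) : ZMod 2) := by
  rw [bit2, appr_mod x h, show (2:ℕ)^(k+1) = 2^k * 2 from pow_succ 2 k,
    Nat.mod_mul_right_div_self, ZMod.natCast_mod]

lemma appr_natCast (c n : ℕ) : ((c : ℤ_[2]).appr n) = c % 2^n := by
  have := val_padMod n (c : ℤ_[2])
  rw [padMod_natCast, ZMod.val_natCast] at this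
  omega

lemma bit2_natCast (k c : ℕ) : bit2 k (c : ℤ_[2]) = ((c / 2^k : ℕ) : ZMod 2) := by
  rw [bit2, appr_natCast, show (2:ℕ)^(k+1) = 2^k * 2 from pow_succ 2 k,
    Nat.mod_mul_right_div_self, ZMod.natCast_mod]

lemma bitZM_eq (n s : ℕ) (a : ZMod (2^n)) : bitZM n s a = bit2 s ((a.val : ℕ) : ℤ_[2]) := by
  rw [bitZM, bit2_natCast]

lemma appr_eq_of_bits (x y : ℤ_[2]) (t : ℕ) (h : ∀ k < t, bit2 k x = bit2 k y) :
    x.appr t = y.appr t := by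
  induction t with
  | zero => simp [PadicInt.appr]
  | succ t ih =>
    have ht : x.appr t = y.appr t := ih (fun k hk => h k (hk.trans (Nat.lt_succ_self t)))
    have hx1 : x.appr t = x.appr (t+1) % 2^t := appr_mod x (Nat.le_succ t)
    have hy1 : y.appr t = y.appr (t+1) % 2^t := appr_mod y (Nat.le_succ t)
    have hb := h t (Nat.lt_succ_self t)
    rw [bit2, bit2] at hb
    have hcx : x.appr (t+1) / 2^t < 2 := by
      have := PadicInt.appr_lt x (t+1); rw [pow_succ] at this
      exact Nat.div_lt_of_lt_mul (by omega)
    have hcy : y.appr (t+1) / 2^t < 2 := by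
      have := PadicInt.appr_lt y (t+1); rw [pow_succ] at this
      exact Nat.div_lt_of_lt_mul (by omega)
    have hcc : x.appr (t+1) / 2^t = y.appr (t+1) / 2^t := by
      have := congrArg ZMod.val hb
      rwa [ZMod.val_natCast, ZMod.val_natCast, Nat.mod_eq_of_lt hcx, Nat.mod_eq_of_lt hcy] at this
    have e1 := Nat.div_add_mod (x.appr (t+1)) (2^t)
    rw [hcc] at e1
    have e2 := Nat.div_add_mod (y.appr (t+1)) (2^t)
    omega

lemma bit2_congr {x y : ℤ_[2]} {t k : ℕ} (h : padMod t x = padMod t y) (hk : k < t) :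
    bit2 k x = bit2 k y := by
  rw [bit2_eq_of_appr x hk, bit2_eq_of_appr y hk, (padMod_inj t x y).mp h]

lemma padMod_eq_of_bits (x y : ℤ_[2]) (t : ℕ) (h : ∀ k < t, bit2 k x = bit2 k y) :
    padMod t x = padMod t y := (padMod_inj t x y).mpr (appr_eq_of_bits x y t h)

lemma padMod_mono {x y : ℤ_[2]} {s t : ℕ} (h : padMod t x = padMod t y) (hst : s ≤ t) :
    padMod s x = padMod s y := by
  rw [padMod_inj] at h ⊢
  rw [appr_mod x hst, appr_mod y hst, h]

lemma padMod_eq_iff_norm (t : ℕ) (x y : ℤ_[2]) :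
    padMod t x = padMod t y ↔ ‖x - y‖ ≤ (2:ℝ)^(-(t:ℤ)) := by
  rw [padMod_eq_toZModPow, padMod_eq_toZModPow, ← sub_eq_zero, ← map_sub, ← RingHom.mem_ker,
    PadicInt.ker_toZModPow, ← PadicInt.norm_le_pow_iff_mem_span_pow]
  norm_num

lemma singleCycle_minimalPeriod {α : Type*} [Fintype α] [DecidableEq α] (g : α → α)
    (hg : IsSingleCycle g) (a : α) : Function.minimalPeriod g a = Fintype.card α := by
  have hsurj : Function.Surjective g := by
    intro b
    obtain ⟨k, hk⟩ := hg (g b) b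
    exact ⟨g^[k] b, by rw [← Function.iterate_succ_apply' g k b, Function.iterate_succ_apply]; exact hk⟩
  have hinj : Function.Injective g := (Finite.injective_iff_surjective).mpr hsurj
  have hper : ∃ P > 0, g^[P] a = a := by
    have h := Finset.exists_ne_map_eq_of_card_lt_of_maps_to
      (s := Finset.range (Fintype.card α + 1)) (t := Finset.univ)
      (by simp) (fun i _ => Finset.mem_univ (g^[i] a))
    obtain ⟨k, -, l, -, hkl, he⟩ := h
    rcases Nat.lt_or_ge k l with h' | h'
    · refine ⟨l - k, by omega, ?_⟩
      have : g^[k] (g^[l-k] a) = g^[k] a := by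
        rw [← Function.iterate_add_apply]
        rw [show k + (l - k) = l by omega]; exact he.symm
      exact (Function.Injective.iterate hinj k) this
    · have h'' : k > l := by omega
      refine ⟨k - l, by omega, ?_⟩
      have : g^[l] (g^[k-l] a) = g^[l] a := by
        rw [← Function.iterate_add_apply]
        rw [show l + (k - l) = k by omega]; exact he
      exact (Function.Injective.iterate hinj l) this
  obtain ⟨P0, hP0, hPa⟩ := hper
  have hmin_pos : 0 < Function.minimalPeriod g a :=
    Function.IsPeriodicPt.minimalPeriod_pos hP0 hPa
  set P := Function.minimalPeriod g a with hP
  have hle : P ≤ Fintype.card α := by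
    have := Finset.card_image_of_injOn (s := Finset.range P) (f := fun k => g^[k] a)
      (by intro u hu v hv huv
          exact Function.iterate_injOn_Iio_minimalPeriod
            (by simpa using Finset.mem_range.mp hu) (by simpa using Finset.mem_range.mp hv) huv)
    calc P = ((Finset.range P).image (fun k => g^[k] a)).card := by rw [this, Finset.card_range]
    _ ≤ Finset.univ.card := Finset.card_le_card (Finset.subset_univ _)
    _ = Fintype.card α := Finset.card_univ
  have hge : Fintype.card α ≤ P := by
    have hsub : (Finset.univ : Finset α) ⊆ (Finset.range P).image (fun k => g^[k] a) := by
      intro b _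
      obtain ⟨k, hk⟩ := hg a b
      refine Finset.mem_image.mpr ⟨k % P, Finset.mem_range.mpr (Nat.mod_lt k hmin_pos), ?_⟩
      rw [Function.iterate_mod_minimalPeriod_eq]; exact hk
    calc Fintype.card α = Finset.univ.card := Finset.card_univ.symm
    _ ≤ ((Finset.range P).image (fun k => g^[k] a)).card := Finset.card_le_card hsub
    _ ≤ P := (Finset.card_image_le).trans (le_of_eq (Finset.card_range P))
  omega

lemma singleCycle_iterate_card {α : Type*} [Fintype α] [DecidableEq α] (g : α → α)
    (hg : IsSingleCycle g) (a : α) : g^[Fintype.card α] a = a := by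
  rw [← singleCycle_minimalPeriod g hg a]; exact Function.iterate_minimalPeriod

lemma singleCycle_dvd_of_fixed {α : Type*} [Fintype α] [DecidableEq α] (g : α → α)
    (hg : IsSingleCycle g) (a : α) (c : ℕ) (h : g^[c] a = a) : Fintype.card α ∣ c := by
  rw [← singleCycle_minimalPeriod g hg a]
  exact Function.IsPeriodicPt.minimalPeriod_dvd h

lemma period_mul {β : Type*} {f : ℕ → β} {p : ℕ} (hp : ∀ i, f (i + p) = f i) (c : ℕ) :
    ∀ i, f (i + c * p) = f i := by
  induction c with
  | zero => simp
  | succ c ih => intro i; rw [Nat.succ_mul, ← add_assoc, hp, ih]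

lemma period_gcd {β : Type*} {f : ℕ → β} : ∀ (p q : ℕ), (∀ i, f (i + p) = f i) →
    (∀ i, f (i + q) = f i) → ∀ i, f (i + Nat.gcd p q) = f i := by
  intro p
  induction p using Nat.strong_induction_on with
  | _ p ih =>
    intro q hp hq i
    rcases Nat.eq_zero_or_pos p with rfl | hppos
    · rw [Nat.gcd_zero_left]; exact hq i
    · rw [Nat.gcd_rec p q]
      have hqp : ∀ i, f (i + q % p) = f i := by
        intro i
        have := period_mul hp (q / p) (i + q % p)
        rw [add_assoc] at this
        rw [show q % p + q / p * p = q from Nat.mod_add_div' q p] at this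
        rw [← this, hq]
      exact ih (q % p) (Nat.mod_lt q hppos) p hqp hp i

end AuxPeriod

/-- for the trajectory mod `2^n` of the conjugate `G = H^B` of a
compatible ergodic `H : ℤ₂ → ℤ₂`, the binary sequence of the `s`-th bit of the
`j`-th coordinate is purely periodic with least period exactly `2^{ms+j+1}`. -/
theorem coordinate_bit_period (m n : ℕ) (hm : 0 < m)
    (B : (Fin m → ℤ_[2]) → ℤ_[2])
    (hB : ∀ (x : Fin m → ℤ_[2]) (k : ℕ),
      bit2 k (B x) = bit2 (k / m) (x ⟨k % m, Nat.mod_lt k hm⟩))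
    (H : ℤ_[2] → ℤ_[2]) (hHc : Compatible H) (hHe : ErgodicZ H)
    (G : (Fin m → ℤ_[2]) → Fin m → ℤ_[2])
    (hG : ∀ x, B (G x) = H (B x))
    (x : ℕ → Fin m → ZMod (2^n))
    (hx : ∀ i : ℕ, x (i+1) = inducedMapM m n G (x i))
    (s : ℕ) (hs : s < n) (j : Fin m) :
    (∀ i : ℕ, bitZM n s (x (i + 2^(m*s + (j : ℕ) + 1)) j) = bitZM n s (x i j)) ∧
    (∀ p : ℕ, 0 < p → (∀ i : ℕ, bitZM n s (x (i + p) j) = bitZM n s (x i j)) →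
      2^(m*s + (j : ℕ) + 1) ≤ p) := by
  set k0 : ℕ := m*s + (j : ℕ) with hk0
  have hjm : (j : ℕ) < m := j.2
  have hk0n : k0 + 1 ≤ m*n := by
    have h2 : m*(s+1) ≤ m*n := Nat.mul_le_mul_left m hs
    rw [Nat.mul_succ] at h2
    omega
  set z : ℕ → ℤ_[2] := fun i => B (fun r => (((x i r).val : ℕ) : ℤ_[2])) with hz
  have hHcomp : ∀ (t : ℕ) (u v : ℤ_[2]), padMod t u = padMod t v →
      padMod t (H u) = padMod t (H v) := by
    intro t u v h
    rw [padMod_eq_iff_norm] at h ⊢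
    exact le_trans (hHc u v) h
  have hBcong : ∀ (u v : Fin m → ℤ_[2]) (t : ℕ), t ≤ m*n →
      (∀ r, padMod n (u r) = padMod n (v r)) → padMod t (B u) = padMod t (B v) := by
    intro u v t ht h
    apply padMod_eq_of_bits
    intro k hk
    rw [hB u k, hB v k]
    have hkdm : k / m < n := by
      apply (Nat.div_lt_iff_lt_mul hm).mpr
      calc k < m * n := lt_of_lt_of_le hk ht
        _ = n * m := Nat.mul_comm m n
    exact bit2_congr (h _) hkdm
  have hstep : ∀ t, t ≤ m*n → ∀ i,
      padMod t (z (i+1)) = inducedMap t H (padMod t (z i)) := by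
    intro t ht i
    have h1 : padMod t (H ((((padMod t (z i)).val : ℕ)) : ℤ_[2])) = padMod t (H (z i)) :=
      hHcomp t _ _ (padMod_lift t _)
    have h2 : ∀ r, padMod n ((((x (i+1) r).val : ℕ)) : ℤ_[2]) =
        padMod n (G (fun r' => (((x i r').val : ℕ) : ℤ_[2])) r) := by
      intro r
      rw [padMod_lift, hx i]
      rfl
    calc padMod t (z (i+1))
        = padMod t (B (G (fun r' => (((x i r').val : ℕ) : ℤ_[2])))) := hBcong _ _ t ht h2
      _ = padMod t (H (z i)) := by rw [hG]
      _ = inducedMap t H (padMod t (z i)) := h1.symm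
  have hiter : ∀ t, t ≤ m*n → ∀ (c i : ℕ),
      padMod t (z (i+c)) = (inducedMap t H)^[c] (padMod t (z i)) := by
    intro t ht c
    induction c with
    | zero => intro i; simp
    | succ c ih =>
      intro i
      rw [show i + (c+1) = (i+c)+1 by omega, hstep t ht (i+c), ih i,
        Function.iterate_succ_apply']
  have hcard : ∀ t : ℕ, Fintype.card (ZMod (2^t)) = 2^t := fun t => ZMod.card _
  have hbit : ∀ i, bitZM n s (x i j) = bit2 k0 (z i) := by
    intro i
    have h1 := hB (fun r => (((x i r).val : ℕ) : ℤ_[2])) k0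
    have hdiv : k0 / m = s := by
      rw [hk0, Nat.mul_add_div hm, Nat.div_eq_of_lt hjm, Nat.add_zero]
    have hmod : (⟨k0 % m, Nat.mod_lt k0 hm⟩ : Fin m) = j := by
      apply Fin.ext
      show k0 % m = (j : ℕ)
      rw [hk0, Nat.mul_add_mod, Nat.mod_eq_of_lt hjm]
    rw [h1, hdiv, hmod, bitZM_eq]
  have part1 : ∀ i : ℕ, bitZM n s (x (i + 2^(k0 + 1)) j) = bitZM n s (x i j) := by
    intro i
    have hper1 : padMod (k0+1) (z (i + 2^(k0+1))) = padMod (k0+1) (z i) := by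
      rw [hiter (k0+1) hk0n (2^(k0+1)) i]
      have := singleCycle_iterate_card (inducedMap (k0+1) H) (hHe (k0+1)) (padMod (k0+1) (z i))
      rwa [hcard] at this
    rw [hbit, hbit]
    exact bit2_congr hper1 (Nat.lt_succ_self k0)
  refine ⟨part1, ?_⟩
  intro p hppos hper
  by_contra hlt
  push_neg at hlt
  have hk0n' : k0 ≤ m*n := by omega
  have hzmod2 : ∀ a b : ZMod 2, a ≠ b → a = b + 1 := by decide
  have hflip : ∀ i, bitZM n s (x (i + 2^k0) j) = bitZM n s (x i j) + 1 := by
    intro i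
    have hlow : padMod k0 (z (i + 2^k0)) = padMod k0 (z i) := by
      rw [hiter k0 hk0n' (2^k0) i]
      have := singleCycle_iterate_card (inducedMap k0 H) (hHe k0) (padMod k0 (z i))
      rwa [hcard] at this
    have hne : padMod (k0+1) (z (i + 2^k0)) ≠ padMod (k0+1) (z i) := by
      intro heq
      rw [hiter (k0+1) hk0n (2^k0) i] at heq
      have hdvd := singleCycle_dvd_of_fixed (inducedMap (k0+1) H) (hHe (k0+1)) _ _ heq
      rw [hcard] at hdvd
      have h1 : (2:ℕ)^(k0+1) ≤ 2^k0 :=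
        Nat.le_of_dvd (Nat.pow_pos (by norm_num)) hdvd
      have h2 : (2:ℕ)^k0 < 2^(k0+1) :=
        Nat.pow_lt_pow_right (by norm_num) (Nat.lt_succ_self k0)
      omega
    have hbne : bit2 k0 (z (i + 2^k0)) ≠ bit2 k0 (z i) := by
      intro hbeq
      apply hne
      apply padMod_eq_of_bits
      intro k hk
      rcases Nat.lt_or_ge k k0 with hk' | hk'
      · exact bit2_congr hlow hk'
      · have hkk : k = k0 := by omega
        rw [hkk]; exact hbeq
    rw [hbit, hbit]
    exact hzmod2 _ _ hbne
  set bseq : ℕ → ZMod 2 := fun i => bitZM n s (x i j) with hbseq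
  have hperb : ∀ i, bseq (i + p) = bseq i := hper
  have hpartb : ∀ i, bseq (i + 2^(k0+1)) = bseq i := part1
  have hgcd := period_gcd p (2^(k0+1)) hperb hpartb
  set d := Nat.gcd p (2^(k0+1)) with hd
  have hdp : d ∣ p := Nat.gcd_dvd_left _ _
  have hdT : d ∣ 2^(k0+1) := Nat.gcd_dvd_right _ _
  have hdle : d ≤ p := Nat.le_of_dvd hppos hdp
  obtain ⟨e, he, hde⟩ := (Nat.dvd_prime_pow Nat.prime_two).mp hdT
  have he' : e ≤ k0 := by
    by_contra h'
    have hek : e = k0 + 1 := by omega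
    rw [hek] at hde
    omega
  have hdvd2 : d ∣ 2^k0 := hde ▸ pow_dvd_pow 2 he'
  obtain ⟨c, hc⟩ := hdvd2
  have hfix : bseq (0 + 2^k0) = bseq 0 := by
    rw [hc, Nat.mul_comm d c]
    exact period_mul hgcd c 0
  have hflip0 : bseq (0 + 2^k0) = bseq 0 + 1 := hflip 0
  rw [hfix] at hflip0
  have h10 : (1 : ZMod 2) = 0 := left_eq_add.mp hflip0
  exact absurd h10 (by decide)
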